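/- If μ′ = μ + (r,r,…,r) for r ∈ ℕ, then every non-attacking filling of μ′ restricted appropriately gives E_{μ′}(x;q,t) = (x_1⋯x_n)^r · E_μ(x;q,t), where both sides are given by the HHL combinatorial formula; equivalently, the combinatorial sum C_{μ′} equals (x_1⋯x_n)^r C_μ. In particular this follows at the level of the defining recursion from (n-fold iteration of) the cyclic-shift identity C_{π(μ)} = q^{μ_n} Ψ C_μ. -/
import Mathlib


open Finset

noncomputable section
attribute [local instance] Classical.propDecidable

/-- `u` lies in the column diagram of the composition `μ` (columns `1,…,n`). -/
def dgIn (n : ℕ) (μ : ℕ → ℕ) (u : ℕ × ℕ) : Prop :=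
  1 ≤ u.1 ∧ u.1 ≤ n ∧ 1 ≤ u.2 ∧ u.2 ≤ μ u.1

/-- `u` lies in the augmented diagram of `μ` (row `0` added). -/
def augIn (n : ℕ) (μ : ℕ → ℕ) (u : ℕ × ℕ) : Prop :=
  1 ≤ u.1 ∧ u.1 ≤ n ∧ u.2 ≤ μ u.1

/-- The column diagram of `μ` as a finite set. -/
def dgF (n : ℕ) (μ : ℕ → ℕ) : Finset (ℕ × ℕ) :=
  (Finset.Icc 1 n).biUnion (fun i => (Finset.Icc 1 (μ i)).image (fun j => (i, j)))

/-- The augmented diagram of `μ` as a finite set. -/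
def augF (n : ℕ) (μ : ℕ → ℕ) : Finset (ℕ × ℕ) :=
  (Finset.Icc 1 n).biUnion (fun i => (Finset.Icc 0 (μ i)).image (fun j => (i, j)))

/-- The box directly below `u`. -/
def dbox (u : ℕ × ℕ) : ℕ × ℕ := (u.1, u.2 - 1)

/-- `v` belongs to the arm of `u` (left arm or right arm). -/
def armIn (n : ℕ) (μ : ℕ → ℕ) (u v : ℕ × ℕ) : Prop :=
  (dgIn n μ v ∧ v.2 = u.2 ∧ v.1 < u.1 ∧ μ v.1 ≤ μ u.1) ∨
  (augIn n μ v ∧ v.2 + 1 = u.2 ∧ u.1 < v.1 ∧ μ v.1 < μ u.1)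

/-- The arm of `u` as a finite set. -/
def armF (n : ℕ) (μ : ℕ → ℕ) (u : ℕ × ℕ) : Finset (ℕ × ℕ) :=
  (augF n μ).filter (fun v => armIn n μ u v)

/-- The leg length `l(u) = μ_i - j`. -/
def legLen (μ : ℕ → ℕ) (u : ℕ × ℕ) : ℕ := μ u.1 - u.2

/-- The arm length `a(u) = |arm(u)|`. -/
def armLen (n : ℕ) (μ : ℕ → ℕ) (u : ℕ × ℕ) : ℕ := (armF n μ u).card

/-- Two distinct boxes attack each other: same row, or consecutive rows with
the lower box strictly to the right. -/
def attacks (u v : ℕ × ℕ) : Prop :=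
  u ≠ v ∧ (u.2 = v.2 ∨ (u.2 = v.2 + 1 ∧ u.1 < v.1) ∨ (v.2 = u.2 + 1 ∧ v.1 < u.1))

/-- Reading order: rows top to bottom, right to left within a row. -/
def rlt (u v : ℕ × ℕ) : Prop := v.2 < u.2 ∨ (u.2 = v.2 ∧ v.1 < u.1)

/-- The augmented filling: value `i` in the row-0 box `(i,0)`. -/
def augOf (σ : ℕ × ℕ → ℕ) : ℕ × ℕ → ℕ := fun u => if u.2 = 0 then u.1 else σ u

/-- The (augmented) filling is non-attacking. -/
def NonAttacking (n : ℕ) (μ : ℕ → ℕ) (σh : ℕ × ℕ → ℕ) : Prop :=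
  ∀ u v : ℕ × ℕ, augIn n μ u → augIn n μ v → attacks u v → σh u ≠ σh v

/-- The set of inversions of an augmented filling: attacking pairs,
earlier box (in reading order) having the larger entry. -/
def invF (n : ℕ) (μ : ℕ → ℕ) (σh : ℕ × ℕ → ℕ) : Finset ((ℕ × ℕ) × (ℕ × ℕ)) :=
  ((augF n μ) ×ˢ (augF n μ)).filter
    (fun p => attacks p.1 p.2 ∧ rlt p.1 p.2 ∧ σh p.2 < σh p.1)

/-- The descent set of an augmented filling. -/
def desF (n : ℕ) (μ : ℕ → ℕ) (σh : ℕ × ℕ → ℕ) : Finset (ℕ × ℕ) :=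
  (dgF n μ).filter (fun u => σh (dbox u) < σh u)

/-- maj = sum of `l(u)+1` over descents. -/
def majStat (n : ℕ) (μ : ℕ → ℕ) (σh : ℕ × ℕ → ℕ) : ℕ :=
  ∑ u ∈ desF n μ σh, (legLen μ u + 1)

/-- `χ_{xy} = 1` iff the earlier box in reading order carries the larger entry. -/
def chi (σh : ℕ × ℕ → ℕ) (x y : ℕ × ℕ) : ℕ :=
  if (rlt x y ∧ σh y < σh x) ∨ (rlt y x ∧ σh x < σh y) then 1 else 0

/-- Triples `(u, v, d(u))`, encoded by the pair `(u, v)` with `v ∈ arm(u)`. -/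
def triplesF (n : ℕ) (μ : ℕ → ℕ) : Finset ((ℕ × ℕ) × (ℕ × ℕ)) :=
  ((dgF n μ) ×ˢ (augF n μ)).filter (fun p => armIn n μ p.1 p.2)

/-- Inversion triples: `χ_{uv} + χ_{vw} - χ_{uw} = 1` where `w = d(u)`. -/
def invTriplesF (n : ℕ) (μ : ℕ → ℕ) (σh : ℕ × ℕ → ℕ) : Finset ((ℕ × ℕ) × (ℕ × ℕ)) :=
  (triplesF n μ).filter
    (fun p => chi σh p.1 p.2 + chi σh p.2 (dbox p.1) = chi σh p.1 (dbox p.1) + 1)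

/-- Co-inversion triples: `χ_{uv} + χ_{vw} - χ_{uw} = 0` where `w = d(u)`. -/
def coinvTriplesF (n : ℕ) (μ : ℕ → ℕ) (σh : ℕ × ℕ → ℕ) : Finset ((ℕ × ℕ) × (ℕ × ℕ)) :=
  (triplesF n μ).filter
    (fun p => chi σh p.1 p.2 + chi σh p.2 (dbox p.1) = chi σh p.1 (dbox p.1))

/-- coinv = number of co-inversion triples. -/
def coinvStat (n : ℕ) (μ : ℕ → ℕ) (σh : ℕ × ℕ → ℕ) : ℕ := (coinvTriplesF n μ σh).card

/-- `σ` is a filling of `μ`, i.e. takes values in `[n]` on the diagram. -/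
def IsFilling (n : ℕ) (μ : ℕ → ℕ) (σ : ℕ × ℕ → ℕ) : Prop :=
  ∀ u : ℕ × ℕ, dgIn n μ u → 1 ≤ σ u ∧ σ u ≤ n

/-- Extend a filling of the diagram (with values in `Fin n`, shifted to `[n]`)
to a function on all boxes. -/
def extFill (n : ℕ) (μ : ℕ → ℕ) (σ : {u // u ∈ dgF n μ} → Fin n) : ℕ × ℕ → ℕ :=
  fun u => if h : u ∈ dgF n μ then ((σ ⟨u, h⟩ : Fin n) : ℕ) + 1 else 0

/-- The Haglund–Haiman–Loehr combinatorial sum `C_μ(x; q, t)`, a sum over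
non-attacking fillings of the column diagram of `μ`. -/
def Cmu (F : Type) [Field F] (n : ℕ) (μ : ℕ → ℕ) (q t : F) (x : ℕ → F) : F :=
  ∑ σ : ({u // u ∈ dgF n μ} → Fin n),
    if NonAttacking n μ (augOf (extFill n μ σ)) then
      (∏ u ∈ dgF n μ, x (augOf (extFill n μ σ) u)) *
        q ^ majStat n μ (augOf (extFill n μ σ)) *
        t ^ coinvStat n μ (augOf (extFill n μ σ)) *
        ∏ u ∈ (dgF n μ).filter
            (fun u => augOf (extFill n μ σ) u ≠ augOf (extFill n μ σ) (dbox u)),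
          ((1 - t) / (1 - q ^ (legLen μ u + 1) * t ^ (armLen n μ u + 1)))
    else 0

section Basics

variable {n : ℕ} {μ : ℕ → ℕ}

lemma mem_dgF {u : ℕ × ℕ} : u ∈ dgF n μ ↔ dgIn n μ u := by
  simp only [dgF, Finset.mem_biUnion, Finset.mem_image, Finset.mem_Icc, dgIn]
  constructor
  · rintro ⟨i, ⟨h1, h2⟩, j, ⟨h3, h4⟩, rfl⟩; exact ⟨h1, h2, h3, h4⟩
  · rintro ⟨h1, h2, h3, h4⟩; exact ⟨u.1, ⟨h1, h2⟩, u.2, ⟨h3, h4⟩, rfl⟩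

lemma mem_augF {u : ℕ × ℕ} : u ∈ augF n μ ↔ augIn n μ u := by
  simp only [augF, Finset.mem_biUnion, Finset.mem_image, Finset.mem_Icc, augIn]
  constructor
  · rintro ⟨i, ⟨h1, h2⟩, j, ⟨h3, h4⟩, rfl⟩; exact ⟨h1, h2, h4⟩
  · rintro ⟨h1, h2, h3⟩; exact ⟨u.1, ⟨h1, h2⟩, u.2, ⟨Nat.zero_le _, h3⟩, rfl⟩

lemma augIn_of_dgIn {u : ℕ × ℕ} (h : dgIn n μ u) : augIn n μ u := by
  simp only [dgIn, augIn] at *; omega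

lemma augIn_dbox {u : ℕ × ℕ} (h : dgIn n μ u) : augIn n μ (dbox u) := by
  simp only [dgIn, augIn, dbox] at *; omega

/-- vertical shift by one row -/
def sh (u : ℕ × ℕ) : ℕ × ℕ := (u.1, u.2 + 1)

lemma sh_inj : Function.Injective sh := by
  intro a b h
  simp only [sh, Prod.ext_iff] at h ⊢
  omega

lemma sh_pred {u : ℕ × ℕ} (h : 1 ≤ u.2) : sh (u.1, u.2 - 1) = u := by
  have : u.2 - 1 + 1 = u.2 := by omega
  simp only [sh, this]

lemma rlt_sh {a b : ℕ × ℕ} : rlt (sh a) (sh b) ↔ rlt a b := by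
  simp only [rlt, sh]; omega

lemma attacks_sh {a b : ℕ × ℕ} : attacks (sh a) (sh b) ↔ attacks a b := by
  simp only [attacks, sh, ne_eq, Prod.ext_iff]; omega

lemma augIn_sh {u : ℕ × ℕ} : augIn n (fun i => μ i + 1) (sh u) ↔ augIn n μ u := by
  simp only [augIn, sh]; omega

lemma dgIn_sh {u : ℕ × ℕ} : dgIn n (fun i => μ i + 1) (sh u) ↔ augIn n μ u := by
  simp only [dgIn, augIn, sh]; omega

lemma armIn_sh {u v : ℕ × ℕ} (hu : 1 ≤ u.2) :
    armIn n (fun i => μ i + 1) (sh u) (sh v) ↔ armIn n μ u v := by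
  simp only [armIn, dgIn, augIn, sh]; omega

lemma armIn_pos {ν : ℕ → ℕ} {u v : ℕ × ℕ} (h2 : 2 ≤ u.2) (h : armIn n ν u v) : 1 ≤ v.2 := by
  simp only [armIn, dgIn, augIn] at h; omega

end Basics
section ShiftE

variable {n : ℕ} {μ : ℕ → ℕ}

/-- Shift a (augmented) filling of `μ` up by one row, to a filling of `μ+1`. -/
def shiftE (e : ℕ × ℕ → ℕ) : ℕ × ℕ → ℕ :=
  fun u => if u.2 = 0 then u.1 else e (u.1, u.2 - 1)

lemma shiftE_sh (e : ℕ × ℕ → ℕ) (u : ℕ × ℕ) : shiftE e (sh u) = e u := by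
  simp only [shiftE, sh, Nat.add_sub_cancel, Nat.succ_ne_zero, if_false]

lemma shiftE_zero (e : ℕ × ℕ → ℕ) {u : ℕ × ℕ} (h : u.2 = 0) : shiftE e u = u.1 := by
  simp only [shiftE, h, if_true]

lemma shiftE_pos (e : ℕ × ℕ → ℕ) {u : ℕ × ℕ} (h : 1 ≤ u.2) :
    shiftE e u = e (u.1, u.2 - 1) := by
  simp only [shiftE]
  rw [if_neg (by omega)]

/-- the augmented filling coming from `augOf` has column labels in row 0 -/
def RowZero (e : ℕ × ℕ → ℕ) : Prop := ∀ u : ℕ × ℕ, u.2 = 0 → e u = u.1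

lemma rowZero_augOf (σ : ℕ × ℕ → ℕ) : RowZero (augOf σ) := by
  intro u hu; simp [augOf, hu]

lemma shiftE_one (e : ℕ × ℕ → ℕ) (he : RowZero e) (i : ℕ) : shiftE e (i, 1) = i := by
  rw [shiftE_pos e (by norm_num)]
  exact he (i, 0) rfl

lemma chi_congr {f g : ℕ × ℕ → ℕ} {a b : ℕ × ℕ} (ha : f a = g a) (hb : f b = g b) :
    chi f a b = chi g a b := by
  simp only [chi, ha, hb]

lemma chi_sh (e : ℕ × ℕ → ℕ) (a b : ℕ × ℕ) : chi (shiftE e) (sh a) (sh b) = chi e a b := by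
  simp only [chi, shiftE_sh, rlt_sh]

lemma rlt_sh_dbox {c a : ℕ × ℕ} (ha : 1 ≤ a.2) : rlt (sh c) a ↔ rlt c (dbox a) := by
  simp only [rlt, sh, dbox]; omega

lemma rlt_dbox_sh {c a : ℕ × ℕ} (ha : 1 ≤ a.2) : rlt a (sh c) ↔ rlt (dbox a) c := by
  simp only [rlt, sh, dbox]; omega

lemma chi_dbox (e : ℕ × ℕ → ℕ) {a : ℕ × ℕ} (ha : 1 ≤ a.2) (c : ℕ × ℕ) :
    chi (shiftE e) (sh c) a = chi e c (dbox a) := by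
  have h2 : shiftE e a = e (dbox a) := shiftE_pos e ha
  simp only [chi, shiftE_sh, h2, rlt_sh_dbox ha, rlt_dbox_sh ha]

end ShiftE
section Congr

variable {n : ℕ} {ν : ℕ → ℕ} {f g : ℕ × ℕ → ℕ}

lemma nonAttacking_congr (h : ∀ u, augIn n ν u → f u = g u) :
    NonAttacking n ν f ↔ NonAttacking n ν g := by
  unfold NonAttacking
  constructor <;> intro H u v hu hv hat
  · rw [← h u hu, ← h v hv]; exact H u v hu hv hat
  · rw [h u hu, h v hv]; exact H u v hu hv hat

lemma desF_congr (h : ∀ u, augIn n ν u → f u = g u) : desF n ν f = desF n ν g := by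
  unfold desF
  apply Finset.filter_congr
  intro u hu
  have hd := mem_dgF.1 hu
  rw [h u (augIn_of_dgIn hd), h (dbox u) (augIn_dbox hd)]

lemma majStat_congr (h : ∀ u, augIn n ν u → f u = g u) : majStat n ν f = majStat n ν g := by
  unfold majStat; rw [desF_congr h]

lemma coinvTriplesF_congr (h : ∀ u, augIn n ν u → f u = g u) :
    coinvTriplesF n ν f = coinvTriplesF n ν g := by
  unfold coinvTriplesF
  apply Finset.filter_congr
  intro p hp
  simp only [triplesF, Finset.mem_filter, Finset.mem_product] at hp
  obtain ⟨⟨h1, h2⟩, _⟩ := hp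
  have hd := mem_dgF.1 h1
  have e1 := h p.1 (augIn_of_dgIn hd)
  have e2 := h p.2 (mem_augF.1 h2)
  have e3 := h (dbox p.1) (augIn_dbox hd)
  rw [chi_congr e1 e2, chi_congr e2 e3, chi_congr e1 e3]

lemma coinvStat_congr (h : ∀ u, augIn n ν u → f u = g u) :
    coinvStat n ν f = coinvStat n ν g := by
  unfold coinvStat; rw [coinvTriplesF_congr h]

end Congr

section Stats

variable {n : ℕ} {μ : ℕ → ℕ} {e : ℕ × ℕ → ℕ}

lemma nonAttacking_shiftE (he : RowZero e) :
    NonAttacking n (fun i => μ i + 1) (shiftE e) ↔ NonAttacking n μ e := by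
  constructor
  · intro H u v hu hv hat
    have := H (sh u) (sh v) (augIn_sh.2 hu) (augIn_sh.2 hv) (attacks_sh.2 hat)
    rwa [shiftE_sh, shiftE_sh] at this
  · intro H u v hu hv hat
    rcases Nat.eq_zero_or_pos u.2 with h0u | h1u <;> rcases Nat.eq_zero_or_pos v.2 with h0v | h1v
    · -- both rows 0
      rw [shiftE_zero e h0u, shiftE_zero e h0v]
      obtain ⟨hne, _⟩ := hat
      intro hc; exact hne (Prod.ext hc (h0u.trans h0v.symm))
    · -- u row 0, v row ≥ 1 : attack forces v.2 = 1, v.1 < u.1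
      have hv1 : v.2 = 1 ∧ v.1 < u.1 := by
        obtain ⟨hne, hor⟩ := hat; omega
      rw [shiftE_zero e h0u, shiftE_pos e h1v]
      have : e (v.1, v.2 - 1) = v.1 := by
        have := he (v.1, v.2 - 1) (by simp; omega)
        simpa using this
      rw [this]; omega
    · have hu1 : u.2 = 1 ∧ u.1 < v.1 := by
        obtain ⟨hne, hor⟩ := hat; omega
      rw [shiftE_zero e h0v, shiftE_pos e h1u]
      have : e (u.1, u.2 - 1) = u.1 := by
        have := he (u.1, u.2 - 1) (by simp; omega)
        simpa using this
      rw [this]; omega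
    · -- both rows ≥ 1
      rw [shiftE_pos e h1u, shiftE_pos e h1v]
      apply H (u.1, u.2 - 1) (v.1, v.2 - 1)
      · simp only [augIn] at hu ⊢; omega
      · simp only [augIn] at hv ⊢; omega
      · obtain ⟨hne, hor⟩ := hat
        refine ⟨?_, by simp only []; omega⟩
        intro hc
        rw [Prod.ext_iff] at hc
        simp only at hc
        exact hne (Prod.ext (by omega) (by omega))

lemma dbox_pair (i j : ℕ) : dbox (i, j) = (i, j - 1) := rfl

lemma shiftE_pair_zero (e : ℕ × ℕ → ℕ) (i : ℕ) : shiftE e (i, 0) = i := by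
  simp [shiftE]

lemma shiftE_pair (e : ℕ × ℕ → ℕ) (i j : ℕ) (h : 1 ≤ j) : shiftE e (i, j) = e (i, j - 1) :=
  shiftE_pos e h

lemma desF_shiftE (he : RowZero e) :
    desF n (fun i => μ i + 1) (shiftE e) = (desF n μ e).image sh := by
  ext u
  obtain ⟨i, j⟩ := u
  simp only [desF, Finset.mem_image, Finset.mem_filter, mem_dgF, dgIn]
  constructor
  · rintro ⟨⟨h1, h2, h3, h4⟩, hlt⟩
    rcases Nat.lt_or_ge j 2 with hj | hj
    · exfalso
      have hj1 : j = 1 := by omega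
      subst hj1
      rw [dbox_pair, show (1 : ℕ) - 1 = 0 from rfl, shiftE_pair_zero,
        shiftE_one e he] at hlt
      exact lt_irrefl _ hlt
    · refine ⟨(i, j - 1), ⟨⟨h1, h2, show (1:ℕ) ≤ j - 1 by omega, show j - 1 ≤ μ i by omega⟩,
        ?_⟩, ?_⟩
      · rw [dbox_pair, shiftE_pair e i j (by omega), shiftE_pair e i (j - 1) (by omega)] at hlt
        show e (dbox (i, j - 1)) < e (i, j - 1)
        rw [dbox_pair]
        exact hlt
      · exact Prod.ext rfl (show j - 1 + 1 = j by omega)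
  · rintro ⟨⟨a, b⟩, ⟨⟨h1, h2, h3, h4⟩, hlt⟩, hsh⟩
    dsimp only at h1 h2 h3 h4 hlt hsh
    simp only [sh, Prod.ext_iff] at hsh
    obtain ⟨rfl, rfl⟩ : a = i ∧ b + 1 = j := hsh
    refine ⟨⟨h1, h2, by omega, by omega⟩, ?_⟩
    rw [dbox_pair, Nat.add_sub_cancel, shiftE_pair e a b (by omega),
      shiftE_pair e a (b + 1) (by omega), Nat.add_sub_cancel]
    rw [dbox_pair] at hlt
    exact hlt

lemma legLen_sh (u : ℕ × ℕ) : legLen (fun i => μ i + 1) (sh u) = legLen μ u := by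
  simp only [legLen, sh]; omega

lemma majStat_shiftE (he : RowZero e) :
    majStat n (fun i => μ i + 1) (shiftE e) = majStat n μ e := by
  unfold majStat
  rw [desF_shiftE he, Finset.sum_image (fun a _ b _ h => sh_inj h)]
  exact Finset.sum_congr rfl fun u _ => by rw [legLen_sh]

lemma armF_shiftE {u : ℕ × ℕ} (hu : dgIn n μ u) :
    armF n (fun i => μ i + 1) (sh u) = (armF n μ u).image sh := by
  have hu2 : 1 ≤ u.2 := hu.2.2.1
  ext v
  simp only [armF, Finset.mem_image, Finset.mem_filter, mem_augF]
  constructor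
  · rintro ⟨hv, harm⟩
    have hv2 : 1 ≤ v.2 := by
      simp only [armIn, dgIn, augIn, sh] at harm; omega
    refine ⟨(v.1, v.2 - 1), ⟨?_, ?_⟩, sh_pred hv2⟩
    · have := (augIn_sh (u := (v.1, v.2 - 1))).1 (by rwa [sh_pred hv2])
      exact this
    · have := (armIn_sh (u := u) (v := (v.1, v.2 - 1)) hu2).1 (by rwa [sh_pred hv2])
      exact this
  · rintro ⟨w, ⟨hw, harm⟩, rfl⟩
    exact ⟨augIn_sh.2 hw, (armIn_sh hu2).2 harm⟩

lemma armLen_sh {u : ℕ × ℕ} (hu : dgIn n μ u) :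
    armLen n (fun i => μ i + 1) (sh u) = armLen n μ u := by
  unfold armLen
  rw [armF_shiftE hu, Finset.card_image_of_injective _ sh_inj]

end Stats
section Coinv

variable {n : ℕ} {μ : ℕ → ℕ} {e : ℕ × ℕ → ℕ}

lemma chi_cond_sh (e : ℕ × ℕ → ℕ) {a : ℕ × ℕ} (b : ℕ × ℕ) (ha : 1 ≤ a.2) :
    (chi (shiftE e) (sh a) (sh b) + chi (shiftE e) (sh b) (dbox (sh a)) =
      chi (shiftE e) (sh a) (dbox (sh a)))
    ↔ (chi e a b + chi e b (dbox a) = chi e a (dbox a)) := by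
  have hd : dbox (sh a) = a := by simp [dbox, sh]
  rw [hd, chi_sh, chi_dbox e ha, chi_dbox e ha]

lemma coinvTriplesF_shiftE (he : RowZero e) :
    coinvTriplesF n (fun i => μ i + 1) (shiftE e)
      = (coinvTriplesF n μ e).image (Prod.map sh sh) := by
  ext p
  obtain ⟨⟨i, j⟩, ⟨k, l⟩⟩ := p
  simp only [coinvTriplesF, triplesF, Finset.mem_image, Finset.mem_filter,
    Finset.mem_product, mem_dgF, mem_augF]
  constructor
  · rintro ⟨⟨⟨hp1, hp2⟩, harm⟩, hchi⟩
    rcases Nat.lt_or_ge j 2 with h2 | h2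
    · -- j = 1 : impossible, such triples are inversion triples
      exfalso
      have hj1 : j = 1 := by
        have := hp1.2.2.1; omega
      subst hj1
      have hc : (l = 1 ∧ k < i) ∨ (l = 0 ∧ i < k) := by
        simp only [armIn, dgIn, augIn] at harm; omega
      have v1 : shiftE e (i, 1) = i := shiftE_one e he i
      have v3 : shiftE e (i, 0) = i := shiftE_pair_zero e i
      have v2 : shiftE e (k, l) = k := by
        rcases hc with ⟨rfl, _⟩ | ⟨rfl, _⟩
        · exact shiftE_one e he k
        · exact shiftE_pair_zero e k
      rw [dbox_pair, show (1 : ℕ) - 1 = 0 from rfl] at hchi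
      simp only [chi, rlt, v1, v2, v3] at hchi
      rcases hc with ⟨rfl, hkl⟩ | ⟨rfl, hkl⟩ <;> split_ifs at hchi <;> omega
    · -- j ≥ 2 : comes from a shifted triple
      have hb : 1 ≤ l := armIn_pos (u := ((i, j) : ℕ × ℕ)) h2 harm
      have hA : sh (i, j - 1) = ((i, j) : ℕ × ℕ) := Prod.ext rfl (show j - 1 + 1 = j by omega)
      have hB : sh (k, l - 1) = ((k, l) : ℕ × ℕ) := Prod.ext rfl (show l - 1 + 1 = l by omega)
      refine ⟨((i, j - 1), (k, l - 1)), ⟨⟨⟨?_, ?_⟩, ?_⟩, ?_⟩, ?_⟩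
      · simp only [dgIn] at hp1 ⊢; omega
      · simp only [augIn] at hp2 ⊢; omega
      · refine (armIn_sh (show (1:ℕ) ≤ j - 1 by omega)).1 ?_
        rw [hA, hB]; exact harm
      · rw [← hA, ← hB] at hchi
        exact (chi_cond_sh e _ (show (1:ℕ) ≤ j - 1 by omega)).1 hchi
      · exact Prod.ext hA hB
  · rintro ⟨⟨⟨a, c⟩, ⟨b, d⟩⟩, ⟨⟨⟨hdg, haug⟩, harm⟩, hchi⟩, heq⟩
    simp only [Prod.map, sh, Prod.ext_iff] at heq
    obtain ⟨⟨rfl, rfl⟩, ⟨rfl, rfl⟩⟩ := heq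
    have hc : (1 : ℕ) ≤ ((a, c) : ℕ × ℕ).2 := hdg.2.2.1
    refine ⟨⟨⟨?_, ?_⟩, ?_⟩, ?_⟩
    · exact dgIn_sh.2 (augIn_of_dgIn hdg)
    · exact augIn_sh.2 haug
    · exact (armIn_sh hc).2 harm
    · exact (chi_cond_sh e _ hc).2 hchi

lemma coinvStat_shiftE (he : RowZero e) :
    coinvStat n (fun i => μ i + 1) (shiftE e) = coinvStat n μ e := by
  unfold coinvStat
  rw [coinvTriplesF_shiftE he,
    Finset.card_image_of_injective _ (Prod.map_injective.2 ⟨sh_inj, sh_inj⟩)]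

end Coinv
section Split

variable {n : ℕ} {μ : ℕ → ℕ} {e : ℕ × ℕ → ℕ}

lemma row1_inj : Function.Injective (fun i : ℕ => ((i, 1) : ℕ × ℕ)) := by
  intro a b h
  simpa [Prod.ext_iff] using h

lemma dgF_split :
    dgF n (fun i => μ i + 1)
      = ((Finset.Icc 1 n).image (fun i => ((i, 1) : ℕ × ℕ))) ∪ (dgF n μ).image sh := by
  ext ⟨i, j⟩
  simp only [Finset.mem_union, Finset.mem_image, mem_dgF, dgIn, Finset.mem_Icc]
  constructor
  · rintro ⟨h1, h2, h3, h4⟩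
    by_cases hj : j = 1
    · exact Or.inl ⟨i, ⟨h1, h2⟩, Prod.ext rfl hj.symm⟩
    · exact Or.inr ⟨(i, j - 1), ⟨h1, h2, show (1:ℕ) ≤ j - 1 by omega,
        show j - 1 ≤ μ i by omega⟩, Prod.ext rfl (show j - 1 + 1 = j by omega)⟩
  · rintro (⟨a, ⟨ha1, ha2⟩, heq⟩ | ⟨⟨a, b⟩, hd, heq⟩)
    · simp only [Prod.ext_iff] at heq
      obtain ⟨rfl, hj⟩ := heq
      refine ⟨ha1, ha2, by omega, by omega⟩
    · simp only [sh, Prod.ext_iff] at heq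
      obtain ⟨rfl, rfl⟩ := heq
      obtain ⟨h1, h2, h3, h4⟩ := hd
      have h3' : 1 ≤ b := h3
      have h4' : b ≤ μ a := h4
      exact ⟨h1, h2, by omega, by omega⟩

lemma dgF_split_disj :
    Disjoint ((Finset.Icc 1 n).image (fun i : ℕ => ((i, 1) : ℕ × ℕ)))
      ((dgF n μ).image sh) := by
  rw [Finset.disjoint_left]
  rintro u hu1 hu2
  simp only [Finset.mem_image, mem_dgF] at hu1 hu2
  obtain ⟨a, _, rfl⟩ := hu1
  obtain ⟨v, hv, hveq⟩ := hu2
  have := hv.2.2.1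
  simp only [sh, Prod.ext_iff] at hveq
  omega

lemma prod_dgF_split {M : Type} [CommMonoid M] (f : ℕ × ℕ → M) :
    ∏ u ∈ dgF n (fun i => μ i + 1), f u
      = (∏ i ∈ Finset.Icc 1 n, f (i, 1)) * ∏ u ∈ dgF n μ, f (sh u) := by
  rw [dgF_split, Finset.prod_union dgF_split_disj,
    Finset.prod_image (fun a _ b _ h => row1_inj h),
    Finset.prod_image (fun a _ b _ h => sh_inj h)]

lemma filterne_shiftE (he : RowZero e) :
    (dgF n (fun i => μ i + 1)).filter (fun u => shiftE e u ≠ shiftE e (dbox u))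
      = ((dgF n μ).filter (fun u => e u ≠ e (dbox u))).image sh := by
  ext u
  obtain ⟨i, j⟩ := u
  simp only [Finset.mem_image, Finset.mem_filter, mem_dgF, dgIn]
  constructor
  · rintro ⟨⟨h1, h2, h3, h4⟩, hne⟩
    rcases Nat.lt_or_ge j 2 with hj | hj
    · exfalso
      have hj1 : j = 1 := by omega
      subst hj1
      rw [dbox_pair, show (1 : ℕ) - 1 = 0 from rfl, shiftE_pair_zero,
        shiftE_one e he] at hne
      exact hne rfl
    · refine ⟨(i, j - 1), ⟨⟨h1, h2, show (1:ℕ) ≤ j - 1 by omega, show j - 1 ≤ μ i by omega⟩,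
        ?_⟩, Prod.ext rfl (show j - 1 + 1 = j by omega)⟩
      rw [dbox_pair, shiftE_pair e i j (by omega), shiftE_pair e i (j - 1) (by omega)] at hne
      show e (i, j - 1) ≠ e (dbox (i, j - 1))
      rw [dbox_pair]
      exact hne
  · rintro ⟨⟨a, b⟩, ⟨⟨h1, h2, h3, h4⟩, hne⟩, hsh⟩
    simp only [sh, Prod.ext_iff] at hsh
    obtain ⟨rfl, rfl⟩ : a = i ∧ b + 1 = j := hsh
    have h3' : 1 ≤ b := h3
    have h4' : b ≤ μ a := h4
    refine ⟨⟨h1, h2, by omega, by omega⟩, ?_⟩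
    rw [dbox_pair, Nat.add_sub_cancel, shiftE_pair e a b (by omega),
      shiftE_pair e a (b + 1) (by omega), Nat.add_sub_cancel]
    rw [dbox_pair] at hne
    exact hne

end Split
section Phi

variable {n : ℕ} {μ : ℕ → ℕ}

/-- The filling of `μ+1` obtained from a filling of `μ`: identity in row 1,
shifted values above. -/
def Phi (n : ℕ) (μ : ℕ → ℕ) (σ : {u // u ∈ dgF n μ} → Fin n) :
    {u // u ∈ dgF n (fun i => μ i + 1)} → Fin n :=
  fun w =>
    if h2 : (w.1.1, w.1.2 - 1) ∈ dgF n μ then σ ⟨_, h2⟩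
    else ⟨w.1.1 - 1, by
      have := mem_dgF.1 w.2
      simp only [dgIn] at this
      omega⟩

lemma mem_dgF_sh {u : ℕ × ℕ} (hu : u ∈ dgF n μ) :
    sh u ∈ dgF n (fun i => μ i + 1) :=
  mem_dgF.2 (dgIn_sh.2 (augIn_of_dgIn (mem_dgF.1 hu)))

lemma Phi_sh (σ : {u // u ∈ dgF n μ} → Fin n) {u : ℕ × ℕ} (hu : u ∈ dgF n μ) :
    Phi n μ σ ⟨sh u, mem_dgF_sh hu⟩ = σ ⟨u, hu⟩ := by
  unfold Phi
  have h2 : ((sh u).1, (sh u).2 - 1) = u := by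
    simp only [sh, Nat.add_sub_cancel]
  have hm : ((sh u).1, (sh u).2 - 1) ∈ dgF n μ := by rw [h2]; exact hu
  rw [dif_pos hm]
  exact congrArg σ (Subtype.ext h2)

lemma Phi_inj : Function.Injective (Phi n μ) := by
  intro σ1 σ2 h
  funext w
  obtain ⟨u, hu⟩ := w
  have := congrFun h ⟨sh u, mem_dgF_sh hu⟩
  rwa [Phi_sh, Phi_sh] at this

/-- agreement of the `Phi`-extension with the shifted augmented filling -/
lemma Phi_agree (σ : {u // u ∈ dgF n μ} → Fin n) :
    ∀ u : ℕ × ℕ, augIn n (fun i => μ i + 1) u →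
      augOf (extFill n (fun i => μ i + 1) (Phi n μ σ)) u
        = shiftE (augOf (extFill n μ σ)) u := by
  intro u hu
  rcases Nat.eq_zero_or_pos u.2 with h0 | h1
  · rw [shiftE_zero _ h0]
    simp [augOf, h0]
  · have hdg : u ∈ dgF n (fun i => μ i + 1) := by
      rw [mem_dgF]
      simp only [augIn] at hu
      simp only [dgIn]
      omega
    have hne : ¬ u.2 = 0 := by omega
    rw [shiftE_pos _ h1]
    simp only [augOf, extFill, hne, if_false]
    rw [dif_pos hdg]
    unfold Phi
    by_cases h2 : (u.1, u.2 - 1) ∈ dgF n μ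
    · rw [dif_pos h2]
      have hne2 : ¬ (u.1, u.2 - 1).2 = 0 := by
        have := (mem_dgF.1 h2).2.2.1
        simp only at this ⊢
        omega
      rw [if_neg hne2, dif_pos h2]
    · rw [dif_neg h2]
      have hd := mem_dgF.1 hdg
      simp only [dgIn] at hd
      have hj1 : u.2 = 1 := by
        by_contra hc
        exact h2 (mem_dgF.2 (by simp only [dgIn]; omega))
      have hz : (u.1, u.2 - 1).2 = 0 := by simp only; omega
      rw [if_pos hz]
      simp only
      omega

/-- a self-map of `[n]` which is injective and decreasing is the identity -/
lemma perm_fix {n : ℕ} (f : ℕ → ℕ) (hmem : ∀ i ∈ Finset.Icc 1 n, f i ∈ Finset.Icc 1 n)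
    (hinj : ∀ i ∈ Finset.Icc 1 n, ∀ j ∈ Finset.Icc 1 n, f i = f j → i = j)
    (hle : ∀ i ∈ Finset.Icc 1 n, f i ≤ i) : ∀ i ∈ Finset.Icc 1 n, f i = i := by
  have himg : (Finset.Icc 1 n).image f = Finset.Icc 1 n := by
    apply Finset.eq_of_subset_of_card_le
    · exact Finset.image_subset_iff.2 hmem
    · rw [Finset.card_image_of_injOn hinj]
  have hsum : ∑ i ∈ Finset.Icc 1 n, f i = ∑ i ∈ Finset.Icc 1 n, i := by
    conv_rhs => rw [← himg]
    rw [Finset.sum_image hinj]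
  exact (Finset.sum_eq_sum_iff_of_le hle).1 hsum

/-- in a non-attacking filling of `μ + 1`, row 1 is the identity -/
lemma row_one_id (σ' : {u // u ∈ dgF n (fun i => μ i + 1)} → Fin n)
    (hna : NonAttacking n (fun i => μ i + 1) (augOf (extFill n (fun i => μ i + 1) σ'))) :
    ∀ i ∈ Finset.Icc 1 n, augOf (extFill n (fun i => μ i + 1) σ') (i, 1) = i := by
  set g := augOf (extFill n (fun i => μ i + 1) σ') with hg
  have hrow : ∀ j, 1 ≤ j → j ≤ n → ((j, 1) : ℕ × ℕ) ∈ dgF n (fun i => μ i + 1) := by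
    intro j h1 h2
    exact mem_dgF.2 (by simp only [dgIn]; omega)
  have haug : ∀ j, 1 ≤ j → j ≤ n → augIn n (fun i => μ i + 1) ((j, 1) : ℕ × ℕ) := by
    intro j h1 h2
    simp only [augIn]; omega
  have hval : ∀ j, (hj1 : 1 ≤ j) → (hj2 : j ≤ n) →
      g (j, 1) = ((σ' ⟨(j, 1), hrow j hj1 hj2⟩ : Fin n) : ℕ) + 1 := by
    intro j h1 h2
    rw [hg]
    simp only [augOf, extFill]
    rw [if_neg (by simp), dif_pos (hrow j h1 h2)]
  have hmem : ∀ j ∈ Finset.Icc 1 n, g (j, 1) ∈ Finset.Icc 1 n := by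
    intro j hj
    rw [Finset.mem_Icc] at hj
    rw [hval j hj.1 hj.2, Finset.mem_Icc]
    have := (σ' ⟨(j, 1), hrow j hj.1 hj.2⟩).isLt
    omega
  have hinj : ∀ i ∈ Finset.Icc 1 n, ∀ j ∈ Finset.Icc 1 n, g (i, 1) = g (j, 1) → i = j := by
    intro i hi j hj hfe
    rw [Finset.mem_Icc] at hi hj
    by_contra hne
    exact hna (i, 1) (j, 1) (haug i hi.1 hi.2) (haug j hj.1 hj.2)
      ⟨by simp only [ne_eq, Prod.ext_iff]; omega, Or.inl rfl⟩ hfe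
  have hle : ∀ j ∈ Finset.Icc 1 n, g (j, 1) ≤ j := by
    intro j hj
    rw [Finset.mem_Icc] at hj
    by_contra hlt
    push_neg at hlt
    have hm := hmem j (Finset.mem_Icc.2 hj)
    rw [Finset.mem_Icc] at hm
    have h0 : augIn n (fun i => μ i + 1) ((g (j, 1), 0) : ℕ × ℕ) := by
      simp only [augIn]; omega
    have hgz : g (g (j, 1), 0) = g (j, 1) := by
      rw [hg]; simp [augOf]
    exact hna (j, 1) (g (j, 1), 0) (haug j hj.1 hj.2) h0
      ⟨by simp only [ne_eq, Prod.ext_iff]; omega, Or.inr (Or.inl ⟨rfl, hlt⟩)⟩ hgz.symm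
  exact perm_fix _ hmem hinj hle

/-- every non-attacking filling of `μ+1` is in the range of `Phi` -/
lemma Phi_range (σ' : {u // u ∈ dgF n (fun i => μ i + 1)} → Fin n)
    (hna : NonAttacking n (fun i => μ i + 1) (augOf (extFill n (fun i => μ i + 1) σ'))) :
    ∃ σ, Phi n μ σ = σ' := by
  refine ⟨fun w => σ' ⟨sh w.1, mem_dgF_sh w.2⟩, ?_⟩
  funext w
  obtain ⟨⟨i, j⟩, h⟩ := w
  have hd := mem_dgF.1 h
  simp only [dgIn] at hd
  unfold Phi
  by_cases h2 : ((i : ℕ), j - 1) ∈ dgF n μ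
  · rw [dif_pos h2]
    refine congrArg σ' (Subtype.ext (Prod.ext rfl ?_))
    have := (mem_dgF.1 h2).2.2.1
    show j - 1 + 1 = j
    simp only at this
    omega
  · rw [dif_neg h2]
    have hj1 : j = 1 := by
      by_contra hc
      exact h2 (mem_dgF.2 (by simp only [dgIn]; omega))
    subst hj1
    have hrow := row_one_id σ' hna i (Finset.mem_Icc.2 ⟨hd.1, hd.2.1⟩)
    have hval : augOf (extFill n (fun i => μ i + 1) σ') (i, 1)
        = ((σ' ⟨(i, 1), h⟩ : Fin n) : ℕ) + 1 := by
      simp only [augOf, extFill]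
      rw [if_neg (by simp), dif_pos h]
    rw [hval] at hrow
    apply Fin.ext
    show i - 1 = _
    omega

end Phi
theorem Cmu_step (F : Type) [Field F] (n : ℕ) (ν μ : ℕ → ℕ) (hνμ : ∀ i, ν i = μ i + 1)
    (q t : F) (x : ℕ → F) :
    Cmu F n ν q t x = (∏ i ∈ Finset.Icc 1 n, x i) * Cmu F n μ q t x := by
  obtain rfl : ν = fun i => μ i + 1 := funext hνμ
  unfold Cmu
  rw [Finset.mul_sum]
  have key : ∀ (σ' : {u // u ∈ dgF n (fun i => μ i + 1)} → Fin n),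
      σ' ∉ Finset.univ.image (Phi n μ) →
      ¬ NonAttacking n (fun i => μ i + 1) (augOf (extFill n (fun i => μ i + 1) σ')) := by
    intro σ' hσ' hna
    obtain ⟨σ, hσ⟩ := Phi_range σ' hna
    exact hσ' (Finset.mem_image.2 ⟨σ, Finset.mem_univ _, hσ⟩)
  rw [← Finset.sum_subset (Finset.subset_univ (Finset.univ.image (Phi n μ)))
    (fun σ' _ h => by rw [if_neg (key σ' h)])]
  rw [Finset.sum_image (fun a _ b _ h => Phi_inj h)]
  apply Finset.sum_congr rfl
  intro σ _
  set e := augOf (extFill n μ σ) with hedef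
  set e' := augOf (extFill n (fun i => μ i + 1) (Phi n μ σ)) with he'def
  have hagree : ∀ u : ℕ × ℕ, augIn n (fun i => μ i + 1) u → e' u = shiftE e u :=
    Phi_agree σ
  have he : RowZero e := rowZero_augOf _
  have hNA : NonAttacking n (fun i => μ i + 1) e' ↔ NonAttacking n μ e :=
    (nonAttacking_congr hagree).trans (nonAttacking_shiftE he)
  have hmaj : majStat n (fun i => μ i + 1) e' = majStat n μ e :=
    (majStat_congr hagree).trans (majStat_shiftE he)
  have hcoinv : coinvStat n (fun i => μ i + 1) e' = coinvStat n μ e :=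
    (coinvStat_congr hagree).trans (coinvStat_shiftE he)
  have hx : (∏ u ∈ dgF n (fun i => μ i + 1), x (e' u))
      = (∏ i ∈ Finset.Icc 1 n, x i) * ∏ u ∈ dgF n μ, x (e u) := by
    have hx1 : (∏ u ∈ dgF n (fun i => μ i + 1), x (e' u))
        = ∏ u ∈ dgF n (fun i => μ i + 1), x (shiftE e u) :=
      Finset.prod_congr rfl (fun u hu => by rw [hagree u (augIn_of_dgIn (mem_dgF.1 hu))])
    rw [hx1, prod_dgF_split (fun u => x (shiftE e u))]
    have h1 : (∏ i ∈ Finset.Icc 1 n, x (shiftE e (i, 1))) = ∏ i ∈ Finset.Icc 1 n, x i :=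
      Finset.prod_congr rfl (fun i _ => by rw [shiftE_one e he])
    have h2 : (∏ u ∈ dgF n μ, x (shiftE e (sh u))) = ∏ u ∈ dgF n μ, x (e u) :=
      Finset.prod_congr rfl (fun u _ => by rw [shiftE_sh])
    rw [h1, h2]
  have hfilter : (dgF n (fun i => μ i + 1)).filter (fun u => e' u ≠ e' (dbox u))
      = ((dgF n μ).filter (fun u => e u ≠ e (dbox u))).image sh := by
    have hfc : ∀ u ∈ dgF n (fun i => μ i + 1),
        (e' u ≠ e' (dbox u)) ↔ (shiftE e u ≠ shiftE e (dbox u)) := by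
      intro u hu
      have hd := mem_dgF.1 hu
      rw [hagree u (augIn_of_dgIn hd), hagree (dbox u) (augIn_dbox hd)]
    rw [Finset.filter_congr hfc]
    exact filterne_shiftE he
  have hprod : (∏ u ∈ (dgF n (fun i => μ i + 1)).filter (fun u => e' u ≠ e' (dbox u)),
        ((1 - t) / (1 - q ^ (legLen (fun i => μ i + 1) u + 1)
          * t ^ (armLen n (fun i => μ i + 1) u + 1))))
      = ∏ u ∈ (dgF n μ).filter (fun u => e u ≠ e (dbox u)),
        ((1 - t) / (1 - q ^ (legLen μ u + 1) * t ^ (armLen n μ u + 1))) := by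
    rw [hfilter, Finset.prod_image (fun a _ b _ h => sh_inj h)]
    apply Finset.prod_congr rfl
    intro u hu
    rw [legLen_sh, armLen_sh (mem_dgF.1 (Finset.mem_filter.1 hu).1)]
  by_cases hna : NonAttacking n μ e
  · rw [if_pos (hNA.2 hna), if_pos hna, hmaj, hcoinv, hx, hprod]
    ring
  · rw [if_neg (fun h => hna (hNA.1 h)), if_neg hna, mul_zero]

/-- if `μ' = μ + (r,…,r)` then
`C_{μ'}(x;q,t) = (x_1 ⋯ x_n)^r C_μ(x;q,t)`. -/
theorem Cmu_add_const (F : Type) [Field F] (n : ℕ) (hn : 1 ≤ n)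
    (μ : ℕ → ℕ) (r : ℕ) (q t : F) (x : ℕ → F)
    (hqt : ∀ k m : ℕ, 1 - q ^ (k + 1) * t ^ (m + 1) ≠ 0) :
    Cmu F n (fun i => μ i + r) q t x =
      (∏ i ∈ Finset.Icc 1 n, x i) ^ r * Cmu F n μ q t x := by
  induction r with
  | zero => simp only [add_zero, pow_zero, one_mul]
  | succ r ih =>
    rw [Cmu_step F n (fun i => μ i + (r + 1)) (fun i => μ i + r)
      (fun i => by ring) q t x, ih, pow_succ]
    ring
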